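/- Let s ≥ 1 and d ≥ 1 be integers, λ a real number, and U_1, …, U_{s-1} unitary d×d complex matrices. On ℂ^d ⊗ ℂ^s define the Hamiltonian H = -(λ/2) Σ_{x=1}^{s-1} ( U_x ⊗ |x+1⟩⟨x| + U_x⁻¹ ⊗ |x⟩⟨x+1| ). For k = 1, …, s set v_k(x) = sqrt(2/(s+1)) · sin(kπx/(s+1)). Then for every vector r ∈ ℂ^d and every k ∈ {1,…,s}, the vector |e_k; r⟩ = Σ_{x=1}^{s} v_k(x) (U_{x-1}·…·U_2·U_1 r) ⊗ e_x (with the empty product U_0·…·U_1 = I for x = 1) is an eigenvector of H with eigenvalue e_k = -λ cos(kπ/(s+1)). -/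

import Mathlib

open Kronecker Matrix Real

/-- The ordered product `U_x · … · U_2 · U_1` (with `prodU U 0 = I`). -/
noncomputable def prodU {d : ℕ} (U : ℕ → Matrix (Fin d) (Fin d) ℂ) : ℕ → Matrix (Fin d) (Fin d) ℂ
  | 0 => 1
  | x + 1 => U (x + 1) * prodU U x

lemma sum_mulVec' {I : Type*} {m n : Type*} [Fintype n] (t : Finset I)
    (M : I → Matrix m n ℂ) (v : n → ℂ) :
    (∑ x ∈ t, M x).mulVec v = ∑ x ∈ t, (M x).mulVec v := by
  ext j
  simp only [mulVec, dotProduct, Finset.sum_apply, Matrix.sum_apply, Finset.sum_mul]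
  rw [Finset.sum_comm]

lemma kron_std_mulVec {d s : ℕ} (M : Matrix (Fin d) (Fin d) ℂ) (a b : Fin s)
    (v : Fin d × Fin s → ℂ) (i : Fin d) (y : Fin s) :
    (M ⊗ₖ Matrix.single a b (1:ℂ)).mulVec v (i, y) =
      if y = a then M.mulVec (fun j => v (j, b)) i else 0 := by
  simp only [mulVec, dotProduct, kroneckerMap_apply, Matrix.single, of_apply]
  rw [Fintype.sum_prod_type]
  by_cases h : y = a
  · subst h
    simp [Finset.sum_ite_eq, mul_comm, mul_ite, ite_mul]
  · rw [if_neg h]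
    simp [fun z => show ¬(a = y ∧ b = z) from fun hc => h hc.1.symm]

noncomputable def cc (s k m : ℕ) : ℂ :=
  ((Real.sqrt (2 / (s + 1)) * Real.sin (k * π * m / (s + 1)) : ℝ) : ℂ)

/-- The eigenvalue problem for Feynman's Hamiltonian
`H = -(λ/2) Σ_{x=1}^{s-1} ( U_x ⊗ |x+1⟩⟨x| + U_x⁻¹ ⊗ |x⟩⟨x+1| )` on `ℂ^d ⊗ ℂ^s`:
for every `r ∈ ℂ^d` and `k ∈ {1,…,s}`, the vector
`|e_k; r⟩ = Σ_{x=1}^{s} v_k(x) (U_{x-1}·…·U_1 r) ⊗ e_x`, where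
`v_k(x) = sqrt(2/(s+1)) sin(kπx/(s+1))`, is an eigenvector of `H` with
eigenvalue `e_k = -λ cos(kπ/(s+1))`. Cursor sites are represented 0-based: the
paper's site `x ∈ {1,…,s}` is the index `x - 1 : Fin s`. -/
theorem feynman_eigenvectors (s d : ℕ) (hs : 1 ≤ s) (hd : 1 ≤ d) (lam : ℝ)
    (U : ℕ → Matrix (Fin d) (Fin d) ℂ)
    (hU : ∀ x, 1 ≤ x → x ≤ s - 1 → U x ∈ Matrix.unitaryGroup (Fin d) ℂ)
    (r : Fin d → ℂ) (k : ℕ) (hk1 : 1 ≤ k) (hks : k ≤ s) :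
    letI H : Matrix (Fin d × Fin s) (Fin d × Fin s) ℂ :=
      (-(lam / 2) : ℂ) • ∑ x : Fin (s - 1),
        ((U (x.val + 1)) ⊗ₖ
            Matrix.single (⟨x.val + 1, by have := x.isLt; omega⟩ : Fin s)
              (⟨x.val, by have := x.isLt; omega⟩ : Fin s) (1 : ℂ) +
          (U (x.val + 1))⁻¹ ⊗ₖ
            Matrix.single (⟨x.val, by have := x.isLt; omega⟩ : Fin s)
              (⟨x.val + 1, by have := x.isLt; omega⟩ : Fin s) (1 : ℂ))
    letI ekr : Fin d × Fin s → ℂ := fun p =>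
      (Real.sqrt (2 / (s + 1)) * Real.sin (k * π * (p.2.val + 1) / (s + 1)) : ℝ) *
        (prodU U p.2.val).mulVec r p.1
    H.mulVec ekr = ((-lam * Real.cos (k * π / (s + 1)) : ℝ) : ℂ) • ekr := by
  have hs1 : ((s : ℝ) + 1) ≠ 0 := by positivity
  -- columns of ekr
  have colA : ∀ (M : Matrix (Fin d) (Fin d) ℂ) (m : ℕ) (i : Fin d),
      M.mulVec (fun j =>
        ((Real.sqrt (2 / (s + 1)) * Real.sin (k * π * ((m : ℝ) + 1) / (s + 1)) : ℝ) : ℂ) *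
          (prodU U m).mulVec r j) i
        = cc s k (m + 1) * (M * prodU U m).mulVec r i := by
    intro M m i
    have h1 : (fun j =>
        ((Real.sqrt (2 / (s + 1)) * Real.sin (k * π * ((m : ℝ) + 1) / (s + 1)) : ℝ) : ℂ) *
          (prodU U m).mulVec r j) =
        (cc s k (m + 1)) • ((prodU U m).mulVec r) := by
      funext j
      simp only [cc, Pi.smul_apply, smul_eq_mul]
      push_cast
      ring_nf
    rw [h1, mulVec_smul, mulVec_mulVec]
    rfl
  -- inverse cancellation
  have hinv : ∀ x : Fin (s - 1),
      (U (x.val + 1))⁻¹ * prodU U (x.val + 1) = prodU U x.val := by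
    intro x
    have hm := hU (x.val + 1) (by omega) (by have := x.isLt; omega)
    have h1 : star (U (x.val + 1)) * U (x.val + 1) = 1 :=
      Matrix.mem_unitaryGroup_iff'.mp hm
    have h2 : (U (x.val + 1))⁻¹ = star (U (x.val + 1)) :=
      Matrix.inv_eq_left_inv h1
    show (U (x.val + 1))⁻¹ * (U (x.val + 1) * prodU U x.val) = prodU U x.val
    rw [h2, ← mul_assoc, h1, one_mul]
  -- the trig identity
  have trig : ∀ m : ℕ,
      Real.sin (k * π * m / (s + 1)) + Real.sin (k * π * (m + 2) / (s + 1)) =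
        2 * Real.cos (k * π / (s + 1)) * Real.sin (k * π * (m + 1) / (s + 1)) := by
    intro m
    have h1 : (k * π * m / (s + 1) : ℝ) =
        k * π * (m + 1) / (s + 1) - k * π / (s + 1) := by
      push_cast; field_simp; ring
    have h2 : (k * π * ((m : ℕ) + 2) / (s + 1) : ℝ) =
        k * π * (m + 1) / (s + 1) + k * π / (s + 1) := by
      push_cast; field_simp; ring
    rw [h1, h2, Real.sin_sub, Real.sin_add]
    ring
  have cc0 : cc s k 0 = 0 := by
    simp [cc]
  have cctop : cc s k (s + 1) = 0 := by
    have h : (k * π * (((s + 1 : ℕ)) : ℝ) / (s + 1) : ℝ) = k * π := by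
      push_cast; field_simp
    simp only [cc, h, Real.sin_nat_mul_pi, mul_zero, Complex.ofReal_zero]
  funext p
  obtain ⟨i, y⟩ := p
  rw [smul_mulVec, sum_mulVec']
  simp only [Pi.smul_apply, Finset.sum_apply, add_mulVec, Pi.add_apply, kron_std_mulVec,
    smul_eq_mul]
  simp only [colA]
  have hstep : ∀ m : ℕ, U (m + 1) * prodU U m = prodU U (m + 1) := fun m => rfl
  simp only [hinv, hstep]
  rw [Finset.sum_add_distrib]
  have hA : (∑ x : Fin (s - 1),
      if y = (⟨x.val + 1, by have := x.isLt; omega⟩ : Fin s) then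
        cc s k (x.val + 1) * ((prodU U (x.val + 1)).mulVec r) i else 0) =
      cc s k y.val * ((prodU U y.val).mulVec r) i := by
    rcases Nat.eq_zero_or_pos y.val with h0 | h1
    · rw [Finset.sum_eq_zero, h0, cc0, zero_mul]
      intro x _
      rw [if_neg]
      intro hEq
      have : y.val = x.val + 1 := congrArg Fin.val hEq
      omega
    · have hy : y.val - 1 < s - 1 := by have := y.isLt; omega
      rw [Finset.sum_eq_single (⟨y.val - 1, hy⟩ : Fin (s - 1))]
      · rw [if_pos (by apply Fin.ext; simp; omega)]
        have e : (⟨y.val - 1, hy⟩ : Fin (s - 1)).val + 1 = y.val := by simp; omega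
        rw [e]
      · intro b _ hb
        rw [if_neg]
        intro hEq
        have h2 : y.val = b.val + 1 := congrArg Fin.val hEq
        exact hb (by apply Fin.ext; simp; omega)
      · intro h; exact absurd (Finset.mem_univ _) h
  have hB : (∑ x : Fin (s - 1),
      if y = (⟨x.val, by have := x.isLt; omega⟩ : Fin s) then
        cc s k (x.val + 1 + 1) * ((prodU U x.val).mulVec r) i else 0) =
      cc s k (y.val + 2) * ((prodU U y.val).mulVec r) i := by
    by_cases h1 : y.val < s - 1
    · rw [Finset.sum_eq_single (⟨y.val, h1⟩ : Fin (s - 1))]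
      · rw [if_pos (by apply Fin.ext; simp)]
      · intro b _ hb
        rw [if_neg]
        intro hEq
        have h2 : y.val = b.val := congrArg Fin.val hEq
        exact hb (by apply Fin.ext; simp; omega)
      · intro h; exact absurd (Finset.mem_univ _) h
    · have hy : y.val = s - 1 := by have := y.isLt; omega
      rw [Finset.sum_eq_zero, show y.val + 2 = s + 1 from by omega, cctop, zero_mul]
      intro x _
      rw [if_neg]
      intro hEq
      have : y.val = x.val := congrArg Fin.val hEq
      have := x.isLt
      omega
  rw [hA, hB]
  have hre : -(lam / 2) * (Real.sqrt (2 / (s + 1)) * Real.sin (k * π * (y.val : ℕ) / (s + 1)) +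
        Real.sqrt (2 / (s + 1)) * Real.sin (k * π * ((y.val : ℕ) + 2 : ℕ) / (s + 1))) =
      (-lam * Real.cos (k * π / (s + 1))) *
        (Real.sqrt (2 / (s + 1)) * Real.sin (k * π * ((y.val : ℝ) + 1) / (s + 1))) := by
    have h := trig y.val
    push_cast at h ⊢
    linear_combination (-(lam / 2) * Real.sqrt (2 / ((s : ℝ) + 1))) * h
  have key : -((lam : ℂ) / 2) * (cc s k y.val + cc s k (y.val + 2)) =
      ((-lam * Real.cos (k * π / (s + 1)) : ℝ) : ℂ) *
        ((Real.sqrt (2 / (s + 1)) * Real.sin (k * π * ((y.val : ℝ) + 1) / (s + 1)) : ℝ) : ℂ) := by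
    simp only [cc]
    exact_mod_cast congrArg (Complex.ofReal) hre
  linear_combination ((prodU U y.val).mulVec r i) * key
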